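/- In the EC-Approximate algorithm, suppose each f_i is L-smooth and convex, the stochastic gradients g^i have variance at most σ², ∑_i ∇f_i(x⋆) = 0 where x⋆ minimizes f, and (1/n)∑_i E‖h^i − ∇f_i(x⋆)‖² ≤ α. Then E_{t+1} ≤ (1 − δ/2) E_t + (8L/δ) F_t + 4α/δ + σ², where E_t = (1/n)∑_i E‖e_t^i‖² and F_t = E[f(x_t)] − f⋆. -/

import Mathlib

open MeasureTheory RealInnerProductSpace

variable {d : ℕ}
local notation "E" => EuclideanSpace ℝ (Fin d)

-- derivative of line composition
lemma line_deriv (f : E → ℝ) (f' : E → E) (hgrad : ∀ x, HasGradientAt f (f' x) x)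
    (a v : E) (t : ℝ) :
    HasDerivAt (fun s : ℝ => f (a + s • v)) (⟪f' (a + t • v), v⟫) t := by
  have hγ : HasDerivAt (fun s : ℝ => a + s • v) v t := by
    simpa using ((hasDerivAt_id t).smul_const v).const_add a
  have := (hgrad (a + t • v)).hasFDerivAt.comp_hasDerivAt t hγ
  simpa [InnerProductSpace.toDual_apply_apply, Function.comp_def] using this

lemma grad_ineq (f : E → ℝ) (f' : E → E) (hgrad : ∀ x, HasGradientAt f (f' x) x)
    (hconv : ConvexOn ℝ Set.univ f) (a b : E) :
    f a + ⟪f' a, b - a⟫ ≤ f b := by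
  set v := b - a with hv
  set ψ : ℝ → ℝ := fun s => f (a + s • v) with hψ
  have hD : HasDerivAt ψ (⟪f' a, v⟫) 0 := by
    simpa using line_deriv f f' hgrad a v 0
  have hslope : ∀ t : ℝ, t ∈ Set.Ioc (0:ℝ) 1 → (ψ t - ψ 0) / t ≤ ψ 1 - ψ 0 := by
    intro t ht
    have hcomb : a + t • v = (1 - t) • a + t • b := by
      simp [hv, smul_sub, sub_smul]; abel
    have := hconv.2 (Set.mem_univ a) (Set.mem_univ b)
      (by linarith [ht.2] : (0:ℝ) ≤ 1 - t) (le_of_lt ht.1) (by ring)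
    rw [← hcomb] at this
    have hψt : ψ t ≤ (1 - t) * f a + t * f b := this
    have hψ0 : ψ 0 = f a := by simp [hψ]
    have hψ1 : ψ 1 = f b := by simp [hψ, hv]
    rw [div_le_iff₀ ht.1]
    nlinarith [ht.1]
  have htends : Filter.Tendsto (fun t => (ψ t - ψ 0) / t) (nhdsWithin 0 (Set.Ioi 0))
      (nhds (⟪f' a, v⟫)) := by
    have := hasDerivAt_iff_tendsto_slope.mp hD
    refine (this.mono_left (nhdsWithin_mono _ ?_)).congr (fun t => by simp [slope, div_eq_inv_mul])
    intro t ht; exact ne_of_gt ht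
  have : ⟪f' a, v⟫ ≤ ψ 1 - ψ 0 := by
    refine le_of_tendsto htends ?_
    filter_upwards [Ioc_mem_nhdsGT_of_mem (Set.mem_Ico.mpr ⟨le_refl 0, zero_lt_one⟩)] with t ht
    exact hslope t ht
  have hψ0 : ψ 0 = f a := by simp [hψ]
  have hψ1 : ψ 1 = f b := by simp [hψ, hv]
  rw [hψ0, hψ1] at this; linarith

lemma descent (L : ℝ) (hL : 0 < L) (f : E → ℝ) (f' : E → E)
    (hgrad : ∀ x, HasGradientAt f (f' x) x)
    (hlip : ∀ x y, ‖f' y - f' x‖ ≤ L * ‖y - x‖) (a b : E) :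
    f b ≤ f a + ⟪f' a, b - a⟫ + L / 2 * ‖b - a‖ ^ 2 := by
  set v := b - a with hv
  have hcont : Continuous f' := by
    have : LipschitzWith L.toNNReal f' := by
      apply LipschitzWith.of_dist_le_mul
      intro p q
      rw [dist_eq_norm, dist_eq_norm, Real.coe_toNNReal _ hL.le]
      exact hlip q p
    exact this.continuous
  have hψd : ∀ t ∈ Set.uIcc (0:ℝ) 1,
      HasDerivAt (fun s : ℝ => f (a + s • v)) (⟪f' (a + t • v), v⟫) t :=
    fun t _ => line_deriv f f' hgrad a v t
  have hcont2 : Continuous fun t : ℝ => (⟪f' (a + t • v), v⟫ : ℝ) := by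
    exact (hcont.comp (by continuity)).inner continuous_const
  have hint : IntervalIntegrable (fun t : ℝ => (⟪f' (a + t • v), v⟫ : ℝ)) volume 0 1 :=
    hcont2.intervalIntegrable 0 1
  have heq : f b - f a = ∫ t in (0:ℝ)..1, ⟪f' (a + t • v), v⟫ := by
    have := intervalIntegral.integral_eq_sub_of_hasDerivAt hψd hint
    simp [hv] at this ⊢
    rw [this]
  have hbound : ∫ t in (0:ℝ)..1, (⟪f' (a + t • v), v⟫ : ℝ) ≤
      ∫ t in (0:ℝ)..1, (⟪f' a, v⟫ + L * ‖v‖ ^ 2 * t) := by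
    apply intervalIntegral.integral_mono_on zero_le_one hint
    · exact (Continuous.intervalIntegrable (by continuity) 0 1)
    · intro t ht
      have h1 : (⟪f' (a + t • v), v⟫ : ℝ) - ⟪f' a, v⟫ = ⟪f' (a + t • v) - f' a, v⟫ := by
        rw [inner_sub_left]
      have h2 : (⟪f' (a + t • v) - f' a, v⟫ : ℝ) ≤ ‖f' (a + t • v) - f' a‖ * ‖v‖ :=
        real_inner_le_norm _ _
      have h3 : ‖f' (a + t • v) - f' a‖ ≤ L * ‖t • v‖ := by
        simpa using hlip a (a + t • v)
      have h4 : ‖t • v‖ = t * ‖v‖ := by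
        rw [norm_smul, Real.norm_eq_abs, abs_of_nonneg ht.1]
      have h5 : ‖f' (a + t • v) - f' a‖ * ‖v‖ ≤ L * (t * ‖v‖) * ‖v‖ := by
        rw [← h4]; exact mul_le_mul_of_nonneg_right h3 (norm_nonneg v)
      have h6 : L * (t * ‖v‖) * ‖v‖ = L * ‖v‖ ^ 2 * t := by ring
      linarith
  have hval : ∫ t in (0:ℝ)..1, ((⟪f' a, v⟫ : ℝ) + L * ‖v‖ ^ 2 * t) =
      ⟪f' a, v⟫ + L / 2 * ‖v‖ ^ 2 := by
    rw [intervalIntegral.integral_add (g := fun t : ℝ => L * ‖v‖ ^ 2 * t) (intervalIntegrable_const)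
      ((continuous_const.mul continuous_id').intervalIntegrable 0 1)]
    rw [intervalIntegral.integral_const_mul, integral_id]
    simp
    ring
  linarith [heq, hbound.trans_eq hval]

lemma cocoercive (L : ℝ) (hL : 0 < L) (f : E → ℝ) (f' : E → E)
    (hgrad : ∀ x, HasGradientAt f (f' x) x)
    (hlip : ∀ x y, ‖f' y - f' x‖ ≤ L * ‖y - x‖)
    (hconv : ConvexOn ℝ Set.univ f) (x y : E) :
    ‖f' x - f' y‖ ^ 2 ≤ 2 * L * (f x - f y - ⟪f' y, x - y⟫) := by
  set u := f' x - f' y with hu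
  set z := x - (1 / L) • u with hz
  have h1 : f z ≤ f x + ⟪f' x, z - x⟫ + L / 2 * ‖z - x‖ ^ 2 :=
    descent L hL f f' hgrad hlip x z
  have h2 : f y + ⟪f' y, z - y⟫ ≤ f z := grad_ineq f f' hgrad hconv y z
  have hzx : z - x = -((1 / L) • u) := by rw [hz]; abel
  have hzy : z - y = (x - y) - (1 / L) • u := by rw [hz]; abel
  have e1 : (⟪f' x, z - x⟫ : ℝ) = -(1 / L) * ⟪f' x, u⟫ := by
    rw [hzx, inner_neg_right, real_inner_smul_right]; ring
  have e2 : (⟪f' y, z - y⟫ : ℝ) = ⟪f' y, x - y⟫ - (1 / L) * ⟪f' y, u⟫ := by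
    rw [hzy, inner_sub_right, real_inner_smul_right]
  have e3 : ‖z - x‖ ^ 2 = (1 / L) ^ 2 * ‖u‖ ^ 2 := by
    rw [hzx, norm_neg, norm_smul, mul_pow, Real.norm_eq_abs, sq_abs]
  have e4 : (⟪f' x, u⟫ : ℝ) - ⟪f' y, u⟫ = ‖u‖ ^ 2 := by
    rw [← inner_sub_left, ← hu, real_inner_self_eq_norm_sq]
  have hLne : L ≠ 0 := ne_of_gt hL
  have key : f y + ⟪f' y, x - y⟫ + (1 / (2 * L)) * ‖u‖ ^ 2 ≤ f x := by
    rw [e1, e3] at h1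
    rw [e2] at h2
    have : (1 / L) * (⟪f' x, u⟫ - ⟪f' y, u⟫) - L / 2 * ((1 / L) ^ 2 * ‖u‖ ^ 2)
        = (1 / (2 * L)) * ‖u‖ ^ 2 := by rw [e4]; field_simp; ring
    linarith
  have h2L : 0 < 2 * L := by linarith
  rw [← sub_nonneg]
  have := mul_le_mul_of_nonneg_left (by linarith [key] : (1 / (2 * L)) * ‖u‖ ^ 2 ≤ f x - f y - ⟪f' y, x - y⟫) h2L.le
  calc (0:ℝ) ≤ 2 * L * (f x - f y - ⟪f' y, x - y⟫) - 2 * L * ((1 / (2 * L)) * ‖u‖ ^ 2) := by linarith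
    _ = 2 * L * (f x - f y - ⟪f' y, x - y⟫) - ‖u‖ ^ 2 := by field_simp

lemma young (δ s t : ℝ) (hδ0 : 0 < δ) (hδ1 : δ ≤ 1) :
    (1 - δ) * (s + t) ^ 2 ≤ (1 - δ / 2) * s ^ 2 + (2 / δ) * t ^ 2 := by
  rw [← mul_le_mul_iff_right₀ hδ0]
  have h2 : δ * ((2 / δ) * t ^ 2) = 2 * t ^ 2 := by field_simp
  nlinarith [sq_nonneg (δ * s - 2 * (1 - δ) * t),
    mul_nonneg (mul_nonneg hδ0.le (by linarith : (0:ℝ) ≤ 3 - δ)) (sq_nonneg t)]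

lemma mean_var_split {Ω : Type*} [MeasurableSpace Ω] (μ : Measure Ω) [IsProbabilityMeasure μ]
    (c a : E) (g : Ω → E)
    (hg : Integrable g μ) (hg2 : Integrable (fun ω => ‖g ω‖ ^ 2) μ)
    (hmean : ∫ ω, g ω ∂μ = c) :
    ∫ ω, ‖a + (g ω - c)‖ ^ 2 ∂μ = ‖a‖ ^ 2 + ∫ ω, ‖g ω - c‖ ^ 2 ∂μ := by
  have hb : Integrable (fun ω => g ω - c) μ := hg.sub (integrable_const c)
  have hb0 : ∫ ω, (g ω - c) ∂μ = 0 := by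
    rw [integral_sub hg (integrable_const c), hmean, integral_const]; simp
  have hinner : Integrable (fun ω => (⟪a, g ω - c⟫ : ℝ)) μ :=
    (innerSL ℝ a : E →L[ℝ] ℝ).integrable_comp hb
  have hbsq : Integrable (fun ω => ‖g ω - c‖ ^ 2) μ := by
    have heq : (fun ω => ‖g ω - c‖ ^ 2)
        = fun ω => ‖g ω‖ ^ 2 - 2 * ⟪c, g ω⟫ + ‖c‖ ^ 2 := by
      funext ω
      rw [norm_sub_sq_real, real_inner_comm]
    rw [heq]
    exact (hg2.sub ((((innerSL ℝ c : E →L[ℝ] ℝ).integrable_comp hg)).const_mul 2)).add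
      (integrable_const _)
  calc ∫ ω, ‖a + (g ω - c)‖ ^ 2 ∂μ
      = ∫ ω, (‖a‖ ^ 2 + 2 * ⟪a, g ω - c⟫ + ‖g ω - c‖ ^ 2) ∂μ := by
        congr 1; funext ω; rw [norm_add_sq_real]
    _ = (∫ ω, (‖a‖ ^ 2 + 2 * ⟪a, g ω - c⟫) ∂μ) + ∫ ω, ‖g ω - c‖ ^ 2 ∂μ := by
        exact integral_add ((integrable_const _).add (hinner.const_mul 2)) hbsq
    _ = ‖a‖ ^ 2 + ∫ ω, ‖g ω - c‖ ^ 2 ∂μ := by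
        rw [integral_add (integrable_const _) (hinner.const_mul 2), integral_const,
          integral_const_mul, integral_inner hb, hb0]
        simp

theorem ec_approximate_error_descent
    {d n : ℕ} {Ω : Type*} [MeasurableSpace Ω] (μ : Measure Ω) [IsProbabilityMeasure μ]
    (hn : 0 < n) (δ σ α L : ℝ)
    (hδ0 : 0 < δ) (hδ1 : δ ≤ 1) (hσ : 0 ≤ σ) (hα : 0 ≤ α) (hL : 0 < L)
    (f : Fin n → EuclideanSpace ℝ (Fin d) → ℝ)
    (f' : Fin n → EuclideanSpace ℝ (Fin d) → EuclideanSpace ℝ (Fin d))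
    (hgrad : ∀ i x, HasGradientAt (f i) (f' i x) x)
    (hlip : ∀ i x y, ‖f' i y - f' i x‖ ≤ L * ‖y - x‖)
    (hconv : ∀ i, ConvexOn ℝ Set.univ (f i))
    (xs : EuclideanSpace ℝ (Fin d))
    (hmin : ∀ y, (1 / n : ℝ) * ∑ i, f i xs ≤ (1 / n : ℝ) * ∑ i, f i y)
    (hsum : ∑ i, f' i xs = 0)
    (x : EuclideanSpace ℝ (Fin d)) (e h : Fin n → EuclideanSpace ℝ (Fin d))
    (happrox : (1 / n : ℝ) * ∑ i, ‖h i - f' i xs‖ ^ 2 ≤ α)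
    (g Δ e' : Fin n → Ω → EuclideanSpace ℝ (Fin d))
    (hint : ∀ i, Integrable (g i) μ ∧ Integrable (fun ω => ‖g i ω‖ ^ 2) μ ∧
      Integrable (fun ω => ‖Δ i ω‖ ^ 2) μ)
    (hunbias : ∀ i, ∫ ω, g i ω ∂μ = f' i x)
    (hvar : ∀ i, ∫ ω, ‖g i ω - f' i x‖ ^ 2 ∂μ ≤ σ ^ 2)
    (he' : ∀ i ω, e' i ω = e i + g i ω - h i - Δ i ω)
    (hC : ∀ i, ∫ ω, ‖Δ i ω - (e i + g i ω - h i)‖ ^ 2 ∂μ ≤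
      (1 - δ) * ∫ ω, ‖e i + g i ω - h i‖ ^ 2 ∂μ) :
    (1 / n : ℝ) * ∑ i, ∫ ω, ‖e' i ω‖ ^ 2 ∂μ ≤
      (1 - δ / 2) * ((1 / n : ℝ) * ∑ i, ‖e i‖ ^ 2)
        + (8 * L / δ) * ((1 / n : ℝ) * ∑ i, f i x - (1 / n : ℝ) * ∑ i, f i xs)
        + 4 * α / δ + σ ^ 2 := by
  have hδ1' : 0 ≤ 1 - δ := by linarith
  -- per-machine bound
  have key : ∀ i, ∫ ω, ‖e' i ω‖ ^ 2 ∂μ ≤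
      (1 - δ / 2) * ‖e i‖ ^ 2 + (4 / δ) * ‖f' i x - f' i xs‖ ^ 2
        + (4 / δ) * ‖h i - f' i xs‖ ^ 2 + σ ^ 2 := by
    intro i
    set c := f' i x with hc
    set a := e i + c - h i with ha
    have hsplit : ∫ ω, ‖e i + g i ω - h i‖ ^ 2 ∂μ = ‖a‖ ^ 2 + ∫ ω, ‖g i ω - c‖ ^ 2 ∂μ := by
      have hrw : (fun ω => ‖e i + g i ω - h i‖ ^ 2) = fun ω => ‖a + (g i ω - c)‖ ^ 2 := by
        funext ω; congr 1; congr 1; rw [ha]; abel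
      rw [hrw]
      exact mean_var_split μ c a (g i) (hint i).1 (hint i).2.1 (hunbias i)
    have hV0 : 0 ≤ ∫ ω, ‖g i ω - c‖ ^ 2 ∂μ := integral_nonneg fun ω => sq_nonneg _
    have hstep1 : ∫ ω, ‖e' i ω‖ ^ 2 ∂μ ≤ (1 - δ) * ‖a‖ ^ 2 + σ ^ 2 := by
      have h1 : ∫ ω, ‖e' i ω‖ ^ 2 ∂μ = ∫ ω, ‖Δ i ω - (e i + g i ω - h i)‖ ^ 2 ∂μ := by
        congr 1; funext ω; rw [he' i ω, ← norm_neg]; congr 1; abel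
      rw [h1]
      refine (hC i).trans ?_
      rw [hsplit, mul_add]
      have h2 : (1 - δ) * ∫ ω, ‖g i ω - c‖ ^ 2 ∂μ ≤ σ ^ 2 := by
        calc (1 - δ) * ∫ ω, ‖g i ω - c‖ ^ 2 ∂μ ≤ 1 * ∫ ω, ‖g i ω - c‖ ^ 2 ∂μ := by
              apply mul_le_mul_of_nonneg_right (by linarith) hV0
          _ ≤ σ ^ 2 := by rw [one_mul]; exact hvar i
      linarith
    have hyoung : (1 - δ) * ‖a‖ ^ 2 ≤ (1 - δ / 2) * ‖e i‖ ^ 2 + (2 / δ) * ‖c - h i‖ ^ 2 := by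
      have h1 : ‖a‖ ≤ ‖e i‖ + ‖c - h i‖ := by
        have : a = e i + (c - h i) := by rw [ha]; abel
        rw [this]; exact norm_add_le _ _
      have h2 : (1 - δ) * ‖a‖ ^ 2 ≤ (1 - δ) * (‖e i‖ + ‖c - h i‖) ^ 2 := by
        apply mul_le_mul_of_nonneg_left _ hδ1'
        exact pow_le_pow_left₀ (norm_nonneg _) h1 2
      exact h2.trans (young δ _ _ hδ0 hδ1)
    have hsq2 : ‖c - h i‖ ^ 2 ≤ 2 * ‖f' i x - f' i xs‖ ^ 2 + 2 * ‖h i - f' i xs‖ ^ 2 := by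
      have h1 : ‖c - h i‖ ≤ ‖f' i x - f' i xs‖ + ‖h i - f' i xs‖ := by
        have : c - h i = (f' i x - f' i xs) - (h i - f' i xs) := by rw [hc]; abel
        rw [this]; exact norm_sub_le _ _
      nlinarith [norm_nonneg (c - h i), norm_nonneg (f' i x - f' i xs),
        norm_nonneg (h i - f' i xs), sq_nonneg (‖f' i x - f' i xs‖ - ‖h i - f' i xs‖)]
    have hδpos : 0 < 2 / δ := by positivity
    have : (2 / δ) * ‖c - h i‖ ^ 2 ≤
        (4 / δ) * ‖f' i x - f' i xs‖ ^ 2 + (4 / δ) * ‖h i - f' i xs‖ ^ 2 := by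
      calc (2 / δ) * ‖c - h i‖ ^ 2
          ≤ (2 / δ) * (2 * ‖f' i x - f' i xs‖ ^ 2 + 2 * ‖h i - f' i xs‖ ^ 2) :=
            mul_le_mul_of_nonneg_left hsq2 hδpos.le
        _ = (4 / δ) * ‖f' i x - f' i xs‖ ^ 2 + (4 / δ) * ‖h i - f' i xs‖ ^ 2 := by ring
    linarith
  -- aggregate
  have hν : (0:ℝ) < 1 / n := by positivity
  have hνn : (1 / n : ℝ) * n = 1 := by
    field_simp
  set sI := ∑ i, ∫ ω, ‖e' i ω‖ ^ 2 ∂μ with hsI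
  set sE := ∑ i, ‖e i‖ ^ 2 with hsE
  set sG := ∑ i, ‖f' i x - f' i xs‖ ^ 2 with hsG
  set sH := ∑ i, ‖h i - f' i xs‖ ^ 2 with hsH
  have hsum1 : sI ≤ (1 - δ / 2) * sE + (4 / δ) * sG + (4 / δ) * sH + n * σ ^ 2 := by
    calc sI ≤ ∑ i, ((1 - δ / 2) * ‖e i‖ ^ 2 + (4 / δ) * ‖f' i x - f' i xs‖ ^ 2
          + (4 / δ) * ‖h i - f' i xs‖ ^ 2 + σ ^ 2) := Finset.sum_le_sum fun i _ => key i
      _ = (1 - δ / 2) * sE + (4 / δ) * sG + (4 / δ) * sH + n * σ ^ 2 := by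
        simp [Finset.sum_add_distrib, ← Finset.mul_sum, hsE, hsG, hsH, mul_comm]
  have hG : sG ≤ 2 * L * ((∑ i, f i x) - ∑ i, f i xs) := by
    have h1 : sG ≤ ∑ i, 2 * L * (f i x - f i xs - ⟪f' i xs, x - xs⟫) :=
      Finset.sum_le_sum fun i _ =>
        cocoercive L hL (f i) (f' i) (hgrad i) (hlip i) (hconv i) x xs
    have h2 : ∑ i, (⟪f' i xs, x - xs⟫ : ℝ) = 0 := by
      rw [← sum_inner, hsum, inner_zero_left]
    calc sG ≤ ∑ i, 2 * L * (f i x - f i xs - ⟪f' i xs, x - xs⟫) := h1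
      _ = 2 * L * ((∑ i, f i x) - (∑ i, f i xs) - ∑ i, (⟪f' i xs, x - xs⟫ : ℝ)) := by
        rw [← Finset.mul_sum]; congr 1
        rw [Finset.sum_sub_distrib, Finset.sum_sub_distrib]
      _ = 2 * L * ((∑ i, f i x) - ∑ i, f i xs) := by rw [h2]; ring
  have h4δ : (0:ℝ) ≤ 4 / δ := by positivity
  have hmain : (1 / n : ℝ) * sI ≤ (1 - δ / 2) * ((1 / n : ℝ) * sE)
      + (4 / δ) * ((1 / n : ℝ) * sG) + (4 / δ) * ((1 / n : ℝ) * sH) + σ ^ 2 := by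
    have := mul_le_mul_of_nonneg_left hsum1 hν.le
    calc (1 / n : ℝ) * sI ≤ (1 / n : ℝ) * ((1 - δ / 2) * sE + (4 / δ) * sG
          + (4 / δ) * sH + n * σ ^ 2) := this
      _ = (1 - δ / 2) * ((1 / n : ℝ) * sE) + (4 / δ) * ((1 / n : ℝ) * sG)
          + (4 / δ) * ((1 / n : ℝ) * sH) + ((1 / n : ℝ) * n) * σ ^ 2 := by ring
      _ = _ := by rw [hνn]; ring
  have hGν : (4 / δ) * ((1 / n : ℝ) * sG) ≤
      (8 * L / δ) * ((1 / n : ℝ) * ∑ i, f i x - (1 / n : ℝ) * ∑ i, f i xs) := by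
    have h1 : (1 / n : ℝ) * sG ≤ (1 / n : ℝ) * (2 * L * ((∑ i, f i x) - ∑ i, f i xs)) :=
      mul_le_mul_of_nonneg_left hG hν.le
    calc (4 / δ) * ((1 / n : ℝ) * sG)
        ≤ (4 / δ) * ((1 / n : ℝ) * (2 * L * ((∑ i, f i x) - ∑ i, f i xs))) :=
          mul_le_mul_of_nonneg_left h1 h4δ
      _ = (8 * L / δ) * ((1 / n : ℝ) * ∑ i, f i x - (1 / n : ℝ) * ∑ i, f i xs) := by ring
  have hHν : (4 / δ) * ((1 / n : ℝ) * sH) ≤ 4 * α / δ := by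
    calc (4 / δ) * ((1 / n : ℝ) * sH) ≤ (4 / δ) * α := mul_le_mul_of_nonneg_left happrox h4δ
      _ = 4 * α / δ := by ring
  linarith
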